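/- Let G and H be connected non-trivial graphs and let x be a Δ-extreme vertex of G (x belongs to no triangle). Then {x} × V(H) and (V(G)\{x}) × V(H) are both Δ-convex in G □ H; hence φ_c(G □ H) = Θ_c(G □ H) = 2. -/

import Mathlib

variable {V : Type*}

/-- A set `S` is Δ-convex: no vertex outside `S` is adjacent to two adjacent vertices of `S`. -/
def DeltaConvex (G : SimpleGraph V) (S : Set V) : Prop :=
  ∀ ⦃u v w : V⦄, u ∈ S → v ∈ S → G.Adj u v → G.Adj w u → G.Adj w v → w ∈ S

/-- The Δ-convex hull of `S`: the smallest Δ-convex set containing `S`. -/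
def DeltaHull (G : SimpleGraph V) (S : Set V) : Set V :=
  ⋂₀ {T | DeltaConvex G T ∧ S ⊆ T}

/-- A Δ-convex `p`-cover. -/
def IsDeltaCover (G : SimpleGraph V) {p : ℕ} (F : Fin p → Set V) : Prop :=
  (∀ i, DeltaConvex G (F i)) ∧ (⋃ i, F i) = Set.univ ∧
    ∀ i, ¬ F i ⊆ ⋃ j ∈ ({i}ᶜ : Set (Fin p)), F j

/-- A Δ-convex `p`-partition. -/
def IsDeltaPartition (G : SimpleGraph V) {p : ℕ} (F : Fin p → Set V) : Prop :=
  (∀ i, DeltaConvex G (F i)) ∧ (⋃ i, F i) = Set.univ ∧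
    (∀ i, (F i).Nonempty) ∧ ∀ i j, i ≠ j → Disjoint (F i) (F j)

/-- The Δ-convex cover number `φ_c(G)`. -/
noncomputable def coverNumber (G : SimpleGraph V) : ℕ :=
  sInf {p | 2 ≤ p ∧ ∃ F : Fin p → Set V, IsDeltaCover G F}

/-- The Δ-convex partition number `Θ_c(G)`. -/
noncomputable def partitionNumber (G : SimpleGraph V) : ℕ :=
  sInf {p | 2 ≤ p ∧ ∃ F : Fin p → Set V, IsDeltaPartition G F}

/-- A vertex is Δ-extreme iff it lies in no triangle (this characterization is used directly). -/
def DeltaExtreme (G : SimpleGraph V) (u : V) : Prop :=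
  ∀ v w : V, ¬ (G.Adj u v ∧ G.Adj u w ∧ G.Adj v w)

variable {α β : Type*}

lemma convex1 (G : SimpleGraph α) (H : SimpleGraph β) (x : α) :
    DeltaConvex (G.boxProd H) (({x} : Set α) ×ˢ (Set.univ : Set β)) := by
  rintro ⟨a, b⟩ ⟨a', b'⟩ ⟨c, d⟩ hu hv huv hwu hwv
  simp only [Set.mem_prod, Set.mem_singleton_iff, Set.mem_univ, and_true] at hu hv ⊢
  subst hu; subst hv
  simp only [SimpleGraph.boxProd_adj] at huv hwu hwv
  rcases hwu with ⟨h1, h2⟩ | ⟨h1, h2⟩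
  · rcases hwv with ⟨h3, h4⟩ | ⟨h3, h4⟩
    · subst h2; subst h4
      rcases huv with ⟨h5, h6⟩ | ⟨h5, h6⟩
      · exact absurd rfl h5.ne
      · exact absurd h5 (SimpleGraph.irrefl H)
    · exact h4
  · exact h2

lemma convex2 (G : SimpleGraph α) (H : SimpleGraph β) (x : α) (hx : DeltaExtreme G x) :
    DeltaConvex (G.boxProd H) ((({x} : Set α)ᶜ) ×ˢ (Set.univ : Set β)) := by
  rintro ⟨a, b⟩ ⟨a', b'⟩ ⟨c, d⟩ hu hv huv hwu hwv
  simp only [Set.mem_prod, Set.mem_compl_iff, Set.mem_singleton_iff, Set.mem_univ,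
    and_true] at hu hv ⊢
  intro hc; subst hc
  simp only [SimpleGraph.boxProd_adj] at huv hwu hwv
  rcases hwu with ⟨h1, h2⟩ | ⟨h1, h2⟩
  · rcases hwv with ⟨h3, h4⟩ | ⟨h3, h4⟩
    · subst h2; subst h4
      rcases huv with ⟨h5, h6⟩ | ⟨h5, h6⟩
      · exact hx a a' ⟨h1, h3, h5⟩
      · exact absurd h5 (SimpleGraph.irrefl H)
    · exact hv h4.symm
  · exact hu h2.symm

theorem stmt14 [Fintype α] [Fintype β] (G : SimpleGraph α) (H : SimpleGraph β)
    (hG : G.Connected) (hH : H.Connected) (hGnt : Nontrivial α) (hHnt : Nontrivial β)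
    (x : α) (hx : DeltaExtreme G x) :
    DeltaConvex (G.boxProd H) (({x} : Set α) ×ˢ (Set.univ : Set β)) ∧
      DeltaConvex (G.boxProd H) ((({x} : Set α)ᶜ) ×ˢ (Set.univ : Set β)) ∧
      coverNumber (G.boxProd H) = 2 ∧ partitionNumber (G.boxProd H) = 2 := by
  obtain ⟨b0⟩ : Nonempty β := hHnt.to_nonempty
  obtain ⟨a0, ha0⟩ := exists_ne x
  set S0 : Set (α × β) := ({x} : Set α) ×ˢ (Set.univ : Set β) with hS0
  set S1 : Set (α × β) := (({x} : Set α)ᶜ) ×ˢ (Set.univ : Set β) with hS1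
  set F : Fin 2 → Set (α × β) := ![S0, S1] with hF
  have hc0 : DeltaConvex (G.boxProd H) S0 := convex1 G H x
  have hc1 : DeltaConvex (G.boxProd H) S1 := convex2 G H x hx
  have hconv : ∀ i, DeltaConvex (G.boxProd H) (F i) := by
    intro i; fin_cases i
    · simpa [hF] using hc0
    · simpa [hF] using hc1
  have hunion : (⋃ i, F i) = Set.univ := by
    ext ⟨a, b⟩
    simp only [Set.mem_iUnion, Set.mem_univ, iff_true]
    by_cases h : a = x
    · exact ⟨0, by simp [hF, S0, h]⟩
    · exact ⟨1, by simp [hF, S1, h]⟩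
  have hmem0 : (x, b0) ∈ S0 := by simp [S0]
  have hnmem0 : (x, b0) ∉ S1 := by simp [S1]
  have hmem1 : (a0, b0) ∈ S1 := by simp [S1, ha0]
  have hnmem1 : (a0, b0) ∉ S0 := by simp [S0]; exact fun h => ha0 h
  have hcov : IsDeltaCover (G.boxProd H) F := by
    refine ⟨hconv, hunion, ?_⟩
    intro i hsub
    fin_cases i
    · have := hsub hmem0
      simp only [Set.mem_iUnion, Set.mem_compl_iff, Set.mem_singleton_iff] at this
      obtain ⟨j, hj, hmem⟩ := this
      have : j = 1 := by fin_cases j <;> simp_all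
      subst this
      exact hnmem0 (by simpa [hF] using hmem)
    · have := hsub hmem1
      simp only [Set.mem_iUnion, Set.mem_compl_iff, Set.mem_singleton_iff] at this
      obtain ⟨j, hj, hmem⟩ := this
      have : j = 0 := by fin_cases j <;> simp_all
      subst this
      exact hnmem1 (by simpa [hF] using hmem)
  have hpart : IsDeltaPartition (G.boxProd H) F := by
    refine ⟨hconv, hunion, ?_, ?_⟩
    · intro i; fin_cases i
      · exact ⟨(x, b0), by simpa [hF] using hmem0⟩
      · exact ⟨(a0, b0), by simpa [hF] using hmem1⟩
    · intro i j hij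
      have hd : Disjoint S0 S1 := by
        rw [Set.disjoint_left]
        rintro ⟨a, b⟩ h0 h1
        simp only [S0, S1, Set.mem_prod, Set.mem_compl_iff, Set.mem_singleton_iff,
          Set.mem_univ, and_true] at h0 h1
        exact h1 h0
      fin_cases i <;> fin_cases j <;> simp_all [hF] <;> exact hd.symm
  refine ⟨hc0, hc1, ?_, ?_⟩
  · refine le_antisymm (Nat.sInf_le ⟨le_refl 2, F, hcov⟩) ?_
    exact le_csInf ⟨2, le_refl 2, F, hcov⟩ (fun p hp => hp.1)
  · refine le_antisymm (Nat.sInf_le ⟨le_refl 2, F, hpart⟩) ?_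
    exact le_csInf ⟨2, le_refl 2, F, hpart⟩ (fun p hp => hp.1)
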